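/- Let (x_k^α, r_k^α) and (x_k^β, r_k^β) be essentially different blowup sequences of a sequence of harmonic maps, satisfying the normalization assumption that whenever r_k^α/r_k^β → 0, either |x_k^α − x_k^β|/r_k^β → ∞ or (x_k^α − x_k^β)/r_k^β converges. Define (x_k^α, r_k^α) < (x_k^β, r_k^β) if r_k^α/r_k^β → 0 and (x_k^α − x_k^β)/r_k^β converges. Then (x_k^α, r_k^α) < (x_k^β, r_k^β) if and only if there exists R > 0 such that for all sufficiently large k, the disk D_{R r_k^α}(x_k^α) is contained in D_{R r_k^β}(x_k^β). -/
import Mathlib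


open Topology Metric Set Filter

noncomputable section

abbrev E2 := EuclideanSpace ℝ (Fin 2)

/-- Two blowup sequences are essentially different. -/
def EssDiff (x1 : ℕ → E2) (r1 : ℕ → ℝ) (x2 : ℕ → E2) (r2 : ℕ → ℝ) : Prop :=
  Tendsto (fun k => r1 k / r2 k) atTop atTop ∨
  Tendsto (fun k => r2 k / r1 k) atTop atTop ∨
  Tendsto (fun k => ‖x1 k - x2 k‖ / (r1 k + r2 k)) atTop atTop

/-- The dichotomy (normalization) assumption: whenever `r1/r2 → 0`, either
`|x1 - x2|/r2 → ∞` or `(x1 - x2)/r2` converges. -/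
def Dichotomy (x1 : ℕ → E2) (r1 : ℕ → ℝ) (x2 : ℕ → E2) (r2 : ℕ → ℝ) : Prop :=
  Tendsto (fun k => r1 k / r2 k) atTop (nhds 0) →
    (Tendsto (fun k => ‖x1 k - x2 k‖ / r2 k) atTop atTop ∨
      ∃ z : E2, Tendsto (fun k => (r2 k)⁻¹ • (x1 k - x2 k)) atTop (nhds z))

/-- The ordering `(x1, r1) < (x2, r2)` on blowup sequences. -/
def BlowupLT (x1 : ℕ → E2) (r1 : ℕ → ℝ) (x2 : ℕ → E2) (r2 : ℕ → ℝ) : Prop :=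
  Tendsto (fun k => r1 k / r2 k) atTop (nhds 0) ∧
    ∃ z : E2, Tendsto (fun k => (r2 k)⁻¹ • (x1 k - x2 k)) atTop (nhds z)

/-- `(x^α, r^α) < (x^β, r^β)` iff eventually `D_{R r^α}(x^α) ⊆ D_{R r^β}(x^β)`
for some `R > 0`. -/
lemma ball_subset_ball_dist {x y : E2} {r s : ℝ} (hr : 0 < r)
    (h : ball x r ⊆ ball y s) : dist x y + r ≤ s := by
  by_contra h'
  push_neg at h'
  have hd : dist x y < s := by
    have := h (mem_ball_self hr)
    simpa [dist_comm] using this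
  set d := dist x y with hdd
  set t : ℝ := (s - d + r) / 2 with ht
  have h0d : 0 ≤ d := dist_nonneg
  have ht0 : 0 < t := by simp only [ht]; linarith
  have htr : t < r := by simp only [ht]; linarith
  have hst : s < d + t := by simp only [ht]; linarith
  -- choose a unit vector u pointing from y away through x
  obtain ⟨u, hu, hnorm⟩ : ∃ u : E2, ‖u‖ = 1 ∧ ‖(x - y) + t • u‖ = d + t := by
    by_cases hxy : x = y
    · refine ⟨EuclideanSpace.single 0 1, by simp, ?_⟩
      simp [hxy, hdd, norm_smul, abs_of_pos ht0]
    · have hne : ‖x - y‖ ≠ 0 := by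
        simp [sub_eq_zero, hxy]
      refine ⟨‖x - y‖⁻¹ • (x - y), ?_, ?_⟩
      · rw [norm_smul, norm_inv, Real.norm_of_nonneg (norm_nonneg _)]
        field_simp
      · have : (x - y) + t • (‖x - y‖⁻¹ • (x - y)) = (1 + t * ‖x - y‖⁻¹) • (x - y) := by
          rw [smul_smul, add_smul, one_smul]
        rw [this, norm_smul]
        have hpos : 0 ≤ 1 + t * ‖x - y‖⁻¹ := by positivity
        rw [Real.norm_of_nonneg hpos, hdd, dist_eq_norm]
        field_simp
  have hmem : x + t • u ∈ ball x r := by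
    simp [dist_eq_norm, norm_smul, hu, abs_of_pos ht0, htr]
  have := h hmem
  rw [mem_ball, dist_eq_norm] at this
  have heq : x + t • u - y = (x - y) + t • u := by abel
  rw [heq, hnorm] at this
  linarith

theorem blowupLT_iff_disks_nested
    (xa xb : ℕ → E2) (ra rb : ℕ → ℝ)
    (hra : ∀ k, 0 < ra k) (hrb : ∀ k, 0 < rb k)
    (hra0 : Tendsto ra atTop (nhds 0)) (hrb0 : Tendsto rb atTop (nhds 0))
    (hdiff : EssDiff xa ra xb rb)
    (hd1 : Dichotomy xa ra xb rb) (hd2 : Dichotomy xb rb xa ra) :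
    BlowupLT xa ra xb rb ↔
      ∃ R : ℝ, 0 < R ∧ ∀ᶠ k in atTop,
        Metric.ball (xa k) (R * ra k) ⊆ Metric.ball (xb k) (R * rb k) := by
  constructor
  · rintro ⟨h0, z, hz⟩
    set R : ℝ := ‖z‖ + 2 with hR
    have hRpos : 0 < R := by positivity
    refine ⟨R, hRpos, ?_⟩
    have hnorm : Tendsto (fun k => ‖(rb k)⁻¹ • (xa k - xb k)‖) atTop (nhds ‖z‖) := hz.norm
    have h1 : ∀ᶠ k in atTop, ‖(rb k)⁻¹ • (xa k - xb k)‖ ≤ ‖z‖ + 1 :=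
      hnorm.eventually_le_const (by linarith)
    have h2 : ∀ᶠ k in atTop, ra k / rb k ≤ 1 / (R + 1) :=
      h0.eventually_le_const (by positivity)
    filter_upwards [h1, h2] with k hk1 hk2
    apply ball_subset_ball'
    have hrb' := hrb k
    have hra' := hra k
    have hdist : ‖xa k - xb k‖ ≤ (‖z‖ + 1) * rb k := by
      have : ‖(rb k)⁻¹ • (xa k - xb k)‖ = ‖xa k - xb k‖ / rb k := by
        rw [norm_smul, norm_inv, Real.norm_of_nonneg hrb'.le]
        ring
      rw [this, div_le_iff₀ hrb'] at hk1
      linarith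
    have hra2 : ra k * (R + 1) ≤ rb k := by
      rw [div_le_div_iff₀ hrb' (by positivity)] at hk2
      linarith
    rw [dist_eq_norm]
    nlinarith [norm_nonneg (xa k - xb k)]
  · rintro ⟨R, hRpos, hball⟩
    have key : ∀ᶠ k in atTop, dist (xa k) (xb k) + R * ra k ≤ R * rb k := by
      filter_upwards [hball] with k hk
      exact ball_subset_ball_dist (mul_pos hRpos (hra k)) hk
    have hle : ∀ᶠ k in atTop, ra k / rb k ≤ 1 := by
      filter_upwards [key] with k hk
      have := dist_nonneg (x := xa k) (y := xb k)
      rw [div_le_one (hrb k)]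
      nlinarith [hra k, hrb k]
    have hbd : ∀ᶠ k in atTop, ‖xa k - xb k‖ / rb k ≤ R := by
      filter_upwards [key] with k hk
      rw [div_le_iff₀ (hrb k), ← dist_eq_norm]
      nlinarith [hra k, dist_nonneg (x := xa k) (y := xb k)]
    have hbd2 : ∀ᶠ k in atTop, ‖xa k - xb k‖ / (ra k + rb k) ≤ R := by
      filter_upwards [hbd] with k hk
      have h1 : ‖xa k - xb k‖ / (ra k + rb k) ≤ ‖xa k - xb k‖ / rb k :=
        div_le_div_of_nonneg_left (norm_nonneg _) (hrb k) (by linarith [hra k])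
      linarith
    have h0 : Tendsto (fun k => ra k / rb k) atTop (nhds 0) := by
      rcases hdiff with h | h | h
      · exfalso
        obtain ⟨k, hk1, hk2⟩ := ((h.eventually_ge_atTop 2).and hle).exists
        linarith
      · have := h.inv_tendsto_atTop
        refine this.congr fun k => ?_
        simp [inv_div]
      · exfalso
        obtain ⟨k, hk1, hk2⟩ := ((h.eventually_ge_atTop (R + 1)).and hbd2).exists
        linarith
    rcases hd1 h0 with h | h
    · exfalso
      obtain ⟨k, hk1, hk2⟩ := ((h.eventually_ge_atTop (R + 1)).and hbd).exists
      linarith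
    · exact ⟨h0, h⟩
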